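/- Fix a real number p > 1 and set λ_{n,k} = (1/n³)(1 + k/n^p) for integers n ≥ 1 and 0 ≤ k ≤ n−1. Then the family of nonnegative numbers ( λ_{n,k} · ( ∑_{j=0}^∞ |E_{n,k}(j)| )² )_{n ≥ 1, 0 ≤ k ≤ n−1} is NOT summable; indeed ∑_{n=1}^∞ ∑_{k=0}^{n−1} λ_{n,k} ( ∑_j |E_{n,k}(j)| )² = ∑_{n=1}^∞ (1/n²) ∑_{k=0}^{n−1} (1 + k/n^p) ≥ ∑_{n=1}^∞ 1/n = ∞. (Thus the orthogonal eigenvector decomposition T = ∑_{n,k} (√λ_{n,k} E_{n,k}) ⊗ (√λ_{n,k} Ē_{n,k}) of the operator T of the previous statements has divergent sum of squared ℓ¹-norms, so T is not of Type A with respect to the standard basis.) -/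

import Mathlib

open scoped BigOperators ENNReal

/-- The vector `E_{n,k} ∈ ℓ²(ℕ, ℂ)` supported on the `n`-th block
`{n(n-1)/2, …, n(n-1)/2 + n - 1}`, with `E_{n,k}(n(n-1)/2 + l) = (1/√n) e^{-2πikl/n}`. -/
noncomputable def Evec (n k : ℕ) : lp (fun _ : ℕ => ℂ) 2 :=
  ∑ l ∈ Finset.range n, lp.single 2 (n * (n - 1) / 2 + l)
    (((1 / Real.sqrt n : ℝ) : ℂ) * Complex.exp (-(2 * Real.pi * Complex.I * k * l) / n))

/-- The eigenvalue `λ_{n,k} = (1/n³)(1 + k/nᵖ)`. -/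
noncomputable def lam (p : ℝ) (n k : ℕ) : ℝ := (1 / (n : ℝ) ^ 3) * (1 + (k : ℝ) / (n : ℝ) ^ p)

/-- The rank-one operator `v ⊗ v̄ : f ↦ ⟨f, v⟩ v` (with `⟨f, v⟩ = ∑ f conj v`). -/
noncomputable def rankOneC {H : Type*} [NormedAddCommGroup H] [InnerProductSpace ℂ H]
    (v : H) : H →L[ℂ] H := (innerSL ℂ v).smulRight v


lemma Evec_tsum (n k : ℕ) (hn : 0 < n) : ∑' j : ℕ, ‖Evec n k j‖ = Real.sqrt n := by
  set b := n * (n - 1) / 2 with hb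
  set c : ℕ → ℂ := fun l => (((1 / Real.sqrt n : ℝ) : ℂ) * Complex.exp (-(2 * Real.pi * Complex.I * k * l) / n)) with hc
  have hnormc : ∀ l, ‖c l‖ = 1 / Real.sqrt n := by
    intro l
    rw [hc, norm_mul, Complex.norm_real, Complex.norm_exp]
    have : (-(2 * Real.pi * Complex.I * k * l) / n).re = 0 := by
      simp [Complex.div_re]
    rw [this, Real.exp_zero, mul_one, Real.norm_eq_abs, abs_of_nonneg (by positivity)]
  have happ : ∀ j, (Evec n k) j = ∑ l ∈ Finset.range n, if j = b + l then c l else 0 := by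
    intro j
    rw [Evec, lp.coeFn_sum, Finset.sum_apply]
    refine Finset.sum_congr rfl fun l _ => ?_
    rw [lp.single_apply]
    exact Pi.single_apply ..
  have hval : ∀ l < n, (Evec n k) (b + l) = c l := by
    intro l hl
    rw [happ]
    rw [Finset.sum_eq_single l]
    · simp
    · intro l' hl' hne
      simp [Nat.add_right_cancel_iff, (by omega : b + l ≠ b + l'), if_neg]
      omega
    · intro h; exact absurd (Finset.mem_range.mpr hl) h
  have hzero : ∀ j ∉ (Finset.range n).image (fun l => b + l), (Evec n k) j = 0 := by
    intro j hj
    rw [happ]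
    refine Finset.sum_eq_zero fun l hl => ?_
    rw [if_neg]
    intro h
    exact hj (Finset.mem_image.mpr ⟨l, hl, h.symm⟩)
  rw [tsum_eq_sum (s := (Finset.range n).image (fun l => b + l))
    (fun j hj => by rw [hzero j hj, norm_zero])]
  rw [Finset.sum_image (fun a _ a' _ h => by omega)]
  have : ∀ l ∈ Finset.range n, ‖Evec n k (b + l)‖ = 1 / Real.sqrt n := by
    intro l hl
    rw [hval l (Finset.mem_range.mp hl), hnormc]
  rw [Finset.sum_congr rfl this, Finset.sum_const, Finset.card_range, nsmul_eq_mul]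
  rw [mul_one_div]
  rw [eq_comm, eq_div_iff (by positivity), Real.mul_self_sqrt (by positivity)]

theorem T_not_type_A (p : ℝ) (hp : 1 < p) :
    ¬ Summable (fun i : Σ n : ℕ, Fin (n + 1) =>
        lam p (i.1 + 1) (i.2 : ℕ) * (∑' j : ℕ, ‖Evec (i.1 + 1) (i.2 : ℕ) j‖) ^ 2) ∧
    ∑' i : Σ n : ℕ, Fin (n + 1), ENNReal.ofReal
        (lam p (i.1 + 1) (i.2 : ℕ) * (∑' j : ℕ, ‖Evec (i.1 + 1) (i.2 : ℕ) j‖) ^ 2) = ⊤ := by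
  set f : (Σ n : ℕ, Fin (n + 1)) → ℝ := fun i =>
    lam p (i.1 + 1) (i.2 : ℕ) * (∑' j : ℕ, ‖Evec (i.1 + 1) (i.2 : ℕ) j‖) ^ 2 with hf
  have hfval : ∀ i : Σ n : ℕ, Fin (n + 1), f i = lam p (i.1 + 1) (i.2 : ℕ) * ((i.1 : ℝ) + 1) := by
    intro i
    rw [hf]
    simp only
    rw [Evec_tsum _ _ (Nat.succ_pos _), Real.sq_sqrt (by positivity)]
    push_cast
    ring
  have hnn : ∀ i, 0 ≤ f i := by
    intro i
    rw [hfval]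
    have h1 : (0:ℝ) < ((i.1:ℝ)+1) := by positivity
    have h2 : (0:ℝ) ≤ lam p (i.1+1) (i.2 : ℕ) := by
      rw [lam]
      have : (0:ℝ) < ((i.1+1 : ℕ):ℝ) ^ p := by positivity
      positivity
    positivity
  have hlow : ∀ i : Σ n : ℕ, Fin (n + 1), 1 / ((i.1 : ℝ) + 1) ^ 2 ≤ f i := by
    intro i
    rw [hfval, lam]
    have hn : (0:ℝ) < (i.1 : ℝ) + 1 := by positivity
    have hnc : ((i.1 + 1 : ℕ) : ℝ) = (i.1 : ℝ) + 1 := by push_cast; ring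
    rw [hnc]
    have hk : (0:ℝ) ≤ ((i.2 : ℕ) : ℝ) / ((i.1 : ℝ) + 1) ^ p := by positivity
    have : 1 / ((i.1:ℝ)+1) ^ 3 * 1 * (((i.1:ℝ))+1) ≤
        1 / ((i.1:ℝ)+1) ^ 3 * (1 + ((i.2 : ℕ) : ℝ) / ((i.1 : ℝ) + 1) ^ p) * (((i.1:ℝ))+1) := by
      have := mul_le_mul_of_nonneg_left (by linarith : (1:ℝ) ≤ 1 + ((i.2 : ℕ) : ℝ) / ((i.1 : ℝ) + 1) ^ p) (by positivity : (0:ℝ) ≤ 1 / ((i.1:ℝ)+1) ^ 3)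
      nlinarith
    calc 1 / ((i.1 : ℝ) + 1) ^ 2 = 1 / ((i.1:ℝ)+1) ^ 3 * 1 * (((i.1:ℝ))+1) := by
          field_simp
      _ ≤ _ := this
  -- harmonic divergence in ENNReal
  have hharm : ∑' n : ℕ, ENNReal.ofReal (1 / ((n : ℝ) + 1)) = ⊤ := by
    by_contra h
    have hs := ENNReal.summable_toReal h
    have hs' : Summable (fun n : ℕ => 1 / ((n + 1 : ℕ) : ℝ)) := by
      refine hs.congr fun n => ?_
      rw [ENNReal.toReal_ofReal (by positivity)]
      push_cast; ring
    exact Real.not_summable_one_div_natCast ((summable_nat_add_iff 1).mp hs')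
  have key : ∀ n : ℕ, ENNReal.ofReal (1 / ((n : ℝ) + 1)) ≤
      ∑' k : Fin (n + 1), ENNReal.ofReal (f ⟨n, k⟩) := by
    intro n
    have h1 : ∑' k : Fin (n + 1), ENNReal.ofReal ((1:ℝ) / ((n : ℝ) + 1) ^ 2) ≤
        ∑' k : Fin (n + 1), ENNReal.ofReal (f ⟨n, k⟩) :=
      ENNReal.tsum_le_tsum fun k => ENNReal.ofReal_le_ofReal (hlow ⟨n, k⟩)
    refine le_trans (le_of_eq ?_) h1
    rw [tsum_fintype, Finset.sum_const, Finset.card_univ, Fintype.card_fin, nsmul_eq_mul]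
    rw [← ENNReal.ofReal_natCast (n+1), ← ENNReal.ofReal_mul (by positivity)]
    congr 1
    field_simp
    push_cast
    ring
  have h2 : ∑' i : Σ n : ℕ, Fin (n + 1), ENNReal.ofReal (f i) = ⊤ := by
    rw [ENNReal.tsum_sigma']
    have hle := ENNReal.tsum_le_tsum key
    rw [hharm] at hle
    exact top_le_iff.mp hle
  constructor
  · intro hs
    have := ENNReal.ofReal_tsum_of_nonneg hnn hs
    rw [h2] at this
    exact ENNReal.ofReal_ne_top this
  · exact h2
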